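/- If X is a star-cdc Hausdorff space with a G_δ-diagonal of rank 3, then |X| ≤ 2^ℵ₀. -/

import Mathlib

open Cardinal Set

universe u

section Defs
variable (X : Type u) [TopologicalSpace X]

/-- An open cover of the whole space. -/
def IsOpenCover (𝒰 : Set (Set X)) : Prop := (∀ U ∈ 𝒰, IsOpen U) ∧ ⋃₀ 𝒰 = Set.univ

/-- The cellularity: supremum of cardinalities of pairwise disjoint families of nonempty
open sets, plus `ℵ₀`. -/
noncomputable def cellularity : Cardinal.{u} :=
  max ℵ₀ (⨆ 𝒰 : {𝒰 : Set (Set X) // (∀ U ∈ 𝒰, IsOpen U ∧ U.Nonempty) ∧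
    𝒰.PairwiseDisjoint id}, #𝒰.1)

/-- The weak Lindelöf degree. -/
noncomputable def wLdeg : Cardinal.{u} :=
  sInf {κ | ℵ₀ ≤ κ ∧ ∀ 𝒰 : Set (Set X), IsOpenCover X 𝒰 →
    ∃ 𝒱 ⊆ 𝒰, #𝒱 ≤ κ ∧ Dense (⋃₀ 𝒱)}

/-- The tightness. -/
noncomputable def tightness : Cardinal.{u} :=
  sInf {κ | ℵ₀ ≤ κ ∧ ∀ (A : Set X) (x : X), x ∈ closure A →
    ∃ B ⊆ A, #B ≤ κ ∧ x ∈ closure B}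

/-- The π-character. -/
noncomputable def piCharacter : Cardinal.{u} :=
  sInf {κ | ℵ₀ ≤ κ ∧ ∀ x : X, ∃ 𝒬 : Set (Set X), #𝒬 ≤ κ ∧
    (∀ P ∈ 𝒬, IsOpen P ∧ P.Nonempty) ∧
    ∀ U : Set X, IsOpen U → x ∈ U → ∃ P ∈ 𝒬, P ⊆ U}

/-- The pseudocharacter. -/
noncomputable def pseudoChar : Cardinal.{u} :=
  sInf {κ | ℵ₀ ≤ κ ∧ ∀ x : X, ∃ 𝒱 : Set (Set X), #𝒱 ≤ κ ∧
    (∀ V ∈ 𝒱, IsOpen V ∧ x ∈ V) ∧ ⋂₀ 𝒱 = {x}}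

/-- The closed pseudocharacter. -/
noncomputable def closedPseudoChar : Cardinal.{u} :=
  sInf {κ | ℵ₀ ≤ κ ∧ ∀ x : X, ∃ 𝒱 : Set (Set X), #𝒱 ≤ κ ∧
    (∀ V ∈ 𝒱, IsOpen V ∧ x ∈ V) ∧ (⋂ V ∈ 𝒱, closure V) = {x}}

/-- The density. -/
noncomputable def densityCard : Cardinal.{u} :=
  sInf {κ | ℵ₀ ≤ κ ∧ ∃ D : Set X, #D ≤ κ ∧ Dense D}

/-- The star of a set `A` with respect to a family `𝒰`. -/
def st (A : Set X) (𝒰 : Set (Set X)) : Set X := ⋃₀ {U | U ∈ 𝒰 ∧ (A ∩ U).Nonempty}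

/-- The θ-closure of a set. -/
def thetaClosure (A : Set X) : Set X :=
  {x | ∀ U : Set X, IsOpen U → x ∈ U → (closure U ∩ A).Nonempty}

/-- The θ-density. -/
noncomputable def thetaDensityCard : Cardinal.{u} :=
  sInf {κ | ℵ₀ ≤ κ ∧ ∃ D : Set X, #D ≤ κ ∧ thetaClosure X D = Set.univ}

/-- A discrete family of sets: each point has a neighborhood meeting at most one member. -/
def IsDiscreteFamily (𝒰 : Set (Set X)) : Prop :=
  ∀ x : X, ∃ V : Set X, IsOpen V ∧ x ∈ V ∧ {U | U ∈ 𝒰 ∧ (V ∩ U).Nonempty}.Subsingleton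

/-- Countable discrete cellularity. -/
def CDC : Prop :=
  ∀ 𝒰 : Set (Set X), (∀ U ∈ 𝒰, IsOpen U ∧ U.Nonempty) → IsDiscreteFamily X 𝒰 → 𝒰.Countable

/-- Star-cdc: every open cover has a cdc subspace whose star covers the space. -/
def StarCDC : Prop :=
  ∀ 𝒰 : Set (Set X), IsOpenCover X 𝒰 → ∃ Y : Set X, CDC ↥Y ∧ st X Y 𝒰 = Set.univ

/-- H-closed space: every open cover has a finite subfamily with dense union. -/
def IsHClosedSpace : Prop :=
  ∀ 𝒰 : Set (Set X), IsOpenCover X 𝒰 → ∃ 𝒱 ⊆ 𝒰, 𝒱.Finite ∧ Dense (⋃₀ 𝒱)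

/-- Countable cellularity (ccc). -/
def CCCSpace : Prop :=
  ∀ 𝒰 : Set (Set X), (∀ U ∈ 𝒰, IsOpen U ∧ U.Nonempty) → 𝒰.PairwiseDisjoint id → 𝒰.Countable

/-- Weakly Lindelöf space. -/
def WeaklyLindelof : Prop :=
  ∀ 𝒰 : Set (Set X), IsOpenCover X 𝒰 → ∃ 𝒱 ⊆ 𝒰, 𝒱.Countable ∧ Dense (⋃₀ 𝒱)

/-- Almost Lindelöf space. -/
def AlmostLindelof : Prop :=
  ∀ 𝒰 : Set (Set X), IsOpenCover X 𝒰 → ∃ 𝒱 ⊆ 𝒰, 𝒱.Countable ∧ (⋃ V ∈ 𝒱, closure V) = Set.univ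

/-- A π-base: a family of nonempty open sets such that every nonempty open set contains one. -/
def IsPiBase (ℬ : Set (Set X)) : Prop :=
  (∀ B ∈ ℬ, IsOpen B ∧ B.Nonempty) ∧
  ∀ U : Set X, IsOpen U → U.Nonempty → ∃ B ∈ ℬ, B ⊆ U

/-- Power homogeneous: some power of `X` is homogeneous. -/
def PowerHomogeneous : Prop :=
  ∃ ι : Type u, ∀ x y : ι → X, ∃ h : (ι → X) ≃ₜ (ι → X), h x = y

/-- A strong `G_δ`-diagonal of rank 2. -/
def HasStrongRank2Diagonal : Prop :=
  ∃ 𝒰 : ℕ → Set (Set X), (∀ n, IsOpenCover X (𝒰 n)) ∧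
    ∀ x : X, (⋂ n, closure (st X (st X {x} (𝒰 n)) (𝒰 n))) = {x}

/-- A `G_δ`-diagonal of rank 2. -/
def HasRank2Diagonal : Prop :=
  ∃ 𝒰 : ℕ → Set (Set X), (∀ n, IsOpenCover X (𝒰 n)) ∧
    ∀ x : X, (⋂ n, st X (st X {x} (𝒰 n)) (𝒰 n)) = {x}

/-- A `G_δ`-diagonal of rank 3. -/
def HasRank3Diagonal : Prop :=
  ∃ 𝒰 : ℕ → Set (Set X), (∀ n, IsOpenCover X (𝒰 n)) ∧
    ∀ x : X, (⋂ n, st X (st X (st X {x} (𝒰 n)) (𝒰 n)) (𝒰 n)) = {x}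

/-- Basically disconnected: the closure of every cozero set is open. -/
def BasicallyDisconnected : Prop :=
  ∀ f : C(X, ℝ), IsOpen (closure {x | f x ≠ 0})

end Defs

namespace Stmt8Aux

/-- index well-order of type ω₁ -/
abbrev W : Type u := (Cardinal.aleph 1 : Cardinal.{u}).ord.ToType

theorem countable_Iio (w : W.{u}) : (Set.Iio w).Countable := by
  rw [countable_iff_lt_aleph_one]
  exact Cardinal.mk_Iio_ord_toType w

theorem uncountable_W : ¬ (Set.univ : Set W.{u}).Countable := by
  rw [countable_iff_lt_aleph_one, not_lt, Cardinal.mk_univ, Cardinal.mk_toType,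
    Cardinal.card_ord]

theorem exists_strict_ub {S : Set W.{u}} (hS : S.Countable) : ∃ w : W.{u}, ∀ v ∈ S, v < w := by
  by_contra h
  push_neg at h
  apply uncountable_W.{u}
  have hsub : (Set.univ : Set W.{u}) ⊆ ⋃ v ∈ S, Set.Iic v := by
    intro w _
    obtain ⟨v, hv, hle⟩ := h w
    exact Set.mem_biUnion hv hle
  refine Set.Countable.mono hsub (hS.biUnion fun v _ => ?_)
  rw [← Set.Iio_insert]
  exact (countable_Iio v).insert v

section ER

variable {α : Type u} (c : α → α → ℕ) [Nonempty α]

/-- a erRealizer for the type `τ` over `Set.range σ`, if one exists outside the range. -/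
noncomputable def erRealize (σ : ℕ → α) (τ : ℕ → ℕ) : α :=
  letI := Classical.propDecidable
  if h : ∃ y, y ∉ Set.range σ ∧ ∀ n, c y (σ n) = τ n then h.choose else Classical.arbitrary α

theorem erRealize_spec {σ : ℕ → α} {τ : ℕ → ℕ}
    (h : ∃ y, y ∉ Set.range σ ∧ ∀ n, c y (σ n) = τ n) :
    erRealize c σ τ ∉ Set.range σ ∧ ∀ n, c (erRealize c σ τ) (σ n) = τ n := by
  rw [erRealize, dif_pos h]
  exact h.choose_spec

/-- one saturation erStep. -/
noncomputable def erStep (S : Set α) : Set α :=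
  insert (Classical.arbitrary α) S ∪
    (fun p : (ℕ → α) × (ℕ → ℕ) => erRealize c p.1 p.2) '' {p | Set.range p.1 ⊆ S}

theorem subset_erStep (S : Set α) : S ⊆ erStep c S :=
  fun _ hx => Or.inl (Set.mem_insert_of_mem _ hx)

theorem arbitrary_mem_erStep (S : Set α) : Classical.arbitrary α ∈ erStep c S :=
  Or.inl (Set.mem_insert _ _)

theorem erRealize_mem_erStep {S : Set α} {σ : ℕ → α} (τ : ℕ → ℕ) (hσ : Set.range σ ⊆ S) :
    erRealize c σ τ ∈ erStep c S :=
  Or.inr ⟨(σ, τ), hσ, rfl⟩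

theorem mk_erStep_le {S : Set α} (hS : #S ≤ 2 ^ ℵ₀) : #(erStep c S) ≤ 2 ^ ℵ₀ := by
  rw [Cardinal.two_power_aleph0] at *
  have h1 : #({p : (ℕ → α) × (ℕ → ℕ) | Set.range p.1 ⊆ S}) ≤ 𝔠 := by
    have hinj : Function.Injective
        (fun p : {p : (ℕ → α) × (ℕ → ℕ) | Set.range p.1 ⊆ S} =>
          (fun n => (⟨(⟨p.1.1 n, p.2 (Set.mem_range_self n)⟩ : S), ULift.up (p.1.2 n)⟩ :
            S × ULift.{u} ℕ))) := by
      rintro ⟨⟨σ₁, τ₁⟩, h₁⟩ ⟨⟨σ₂, τ₂⟩, h₂⟩ heq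
      simp only [Subtype.mk.injEq, Prod.mk.injEq]
      constructor
      · funext n
        have := congrFun heq n
        exact congrArg Subtype.val (congrArg Prod.fst this)
      · funext n
        have := congrFun heq n
        have := congrArg Prod.snd this
        exact congrArg ULift.down this
    calc #({p : (ℕ → α) × (ℕ → ℕ) | Set.range p.1 ⊆ S})
        ≤ #(ℕ → S × ULift.{u} ℕ) := Cardinal.mk_le_of_injective hinj
      _ = (#(S × ULift.{u} ℕ)) ^ (ℵ₀ : Cardinal.{u}) := by
          rw [Cardinal.mk_arrow]; simp
      _ ≤ 𝔠 ^ (ℵ₀ : Cardinal.{u}) := by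
          apply Cardinal.power_le_power_right
          rw [Cardinal.mk_prod]
          simp only [Cardinal.lift_id, Cardinal.mk_uLift, Cardinal.mk_nat,
            Cardinal.lift_aleph0]
          calc #S * ℵ₀ ≤ 𝔠 * 𝔠 := by
                apply mul_le_mul'
                · exact hS
                · exact Cardinal.aleph0_le_continuum
            _ = 𝔠 := by rw [Cardinal.mul_eq_self Cardinal.aleph0_le_continuum]
      _ = 𝔠 := Cardinal.continuum_power_aleph0
  calc #(erStep c S) ≤ #(insert (Classical.arbitrary α) S : Set α) +
        #((fun p : (ℕ → α) × (ℕ → ℕ) => erRealize c p.1 p.2) '' {p | Set.range p.1 ⊆ S}) :=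
        Cardinal.mk_union_le _ _
    _ ≤ (#S + 1) + 𝔠 := by
        gcongr
        · exact Cardinal.mk_insert_le
        · exact le_trans (Cardinal.mk_image_le) h1
    _ ≤ (𝔠 + 𝔠) + 𝔠 :=
        add_le_add (add_le_add hS (le_trans Cardinal.one_le_aleph0
          Cardinal.aleph0_le_continuum)) le_rfl
    _ ≤ 𝔠 := by
        rw [Cardinal.add_eq_self Cardinal.aleph0_le_continuum,
          Cardinal.add_eq_self Cardinal.aleph0_le_continuum]


/-- transfinite iteration of `erStep` along `W`. -/
noncomputable def erChain : W.{u} → Set α :=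
  (wellFounded_lt (α := W.{u})).fix fun w ih => erStep c (⋃ v : Set.Iio w, ih v v.2)

theorem erChain_eq (w : W.{u}) :
    erChain c w = erStep c (⋃ v : Set.Iio w, erChain c v) :=
  WellFounded.fix_eq _ _ _

theorem mk_erChain_le (w : W.{u}) : #(erChain c w) ≤ 2 ^ ℵ₀ := by
  refine (wellFounded_lt (α := W.{u})).induction
    (C := fun w => #(erChain c w) ≤ 2 ^ ℵ₀) w ?_
  intro w ih
  rw [erChain_eq]
  apply mk_erStep_le
  haveI : Countable ↥(Set.Iio w) := (countable_Iio w).to_subtype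
  calc #(⋃ v : Set.Iio w, erChain c v)
      ≤ #(↥(Set.Iio w)) * ⨆ v : Set.Iio w, #(erChain c v) := Cardinal.mk_iUnion_le _
    _ ≤ ℵ₀ * 2 ^ ℵ₀ := by
        apply mul_le_mul'
        · exact Cardinal.mk_le_aleph0
        · exact ciSup_le' fun v => ih v v.2
    _ ≤ 2 ^ ℵ₀ := by
        rw [Cardinal.two_power_aleph0]
        calc ℵ₀ * 𝔠 ≤ 𝔠 * 𝔠 := mul_le_mul' Cardinal.aleph0_le_continuum le_rfl
          _ = 𝔠 := Cardinal.mul_eq_self Cardinal.aleph0_le_continuum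

/-- the saturated set. -/
noncomputable def erA : Set α := ⋃ w : W.{u}, erChain c w

theorem mk_erA_le : #(erA c) ≤ 2 ^ ℵ₀ := by
  calc #(erA c) ≤ #(W.{u}) * ⨆ w : W.{u}, #(erChain c w) := Cardinal.mk_iUnion_le _
    _ ≤ (Cardinal.aleph 1) * 2 ^ ℵ₀ := by
        apply mul_le_mul'
        · rw [Cardinal.mk_toType, Cardinal.card_ord]
        · exact ciSup_le' fun w => mk_erChain_le c w
    _ ≤ 2 ^ ℵ₀ := by
        rw [Cardinal.two_power_aleph0]
        calc ℵ₁ * 𝔠 ≤ 𝔠 * 𝔠 :=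
              mul_le_mul' Cardinal.aleph_one_le_continuum le_rfl
          _ = 𝔠 := Cardinal.mul_eq_self Cardinal.aleph0_le_continuum

theorem erA_sat {B : Set α} (hBA : B ⊆ erA c) (hB : B.Countable) {y : α} (hy : y ∉ B) :
    ∃ x ∈ erA c, x ∉ B ∧ ∀ b ∈ B, c x b = c y b := by
  have hWne : Nonempty W.{u} := by
    rw [Ordinal.toType_nonempty_iff_ne_zero]
    intro h
    have := congrArg Ordinal.card h
    rw [Cardinal.card_ord, Ordinal.card_zero] at this
    exact (Cardinal.aleph_pos 1).ne' this
  rcases B.eq_empty_or_nonempty with rfl | hne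
  · obtain ⟨w⟩ := hWne
    refine ⟨Classical.arbitrary α, ?_, by simp, by simp⟩
    exact Set.mem_iUnion.2 ⟨w, by rw [erChain_eq]; exact arbitrary_mem_erStep c _⟩
  · obtain ⟨σ, hσ⟩ := hB.exists_eq_range hne
    have hmem : ∀ n, ∃ w : W.{u}, σ n ∈ erChain c w := by
      intro n
      have : σ n ∈ erA c := hBA (by rw [hσ]; exact Set.mem_range_self n)
      exact Set.mem_iUnion.1 this
    choose f hf using hmem
    obtain ⟨w, hw⟩ := exists_strict_ub (Set.countable_range f)
    set τ : ℕ → ℕ := fun n => c y (σ n) with hτ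
    have hex : ∃ y', y' ∉ Set.range σ ∧ ∀ n, c y' (σ n) = τ n :=
      ⟨y, by rw [← hσ]; exact hy, fun n => rfl⟩
    have hspec := erRealize_spec c hex
    refine ⟨erRealize c σ τ, ?_, ?_, ?_⟩
    · refine Set.mem_iUnion.2 ⟨w, ?_⟩
      rw [erChain_eq]
      apply erRealize_mem_erStep
      rintro _ ⟨n, rfl⟩
      exact Set.mem_iUnion.2 ⟨⟨f n, hw _ (Set.mem_range_self n)⟩, hf n⟩
    · rw [hσ]; exact hspec.1
    · intro b hb
      rw [hσ] at hb
      obtain ⟨n, rfl⟩ := hb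
      exact hspec.2 n

/-- the end-homogeneous sequence over a point `y` outside `erA c`. -/
noncomputable def erSeq (y : α) : W.{u} → α :=
  (wellFounded_lt (α := W.{u})).fix fun w ih =>
    letI := Classical.propDecidable
    if h : ∃ x ∈ erA c, x ∉ (⋃ v : Set.Iio w, {ih v v.2}) ∧
        ∀ b ∈ (⋃ v : Set.Iio w, {ih v v.2}), c x b = c y b then h.choose
    else Classical.arbitrary α

theorem erSeq_eq (y : α) (w : W.{u}) :
    erSeq c y w =
      letI := Classical.propDecidable
      if h : ∃ x ∈ erA c, x ∉ (erSeq c y '' Set.Iio w) ∧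
          ∀ b ∈ (erSeq c y '' Set.Iio w), c x b = c y b then h.choose
      else Classical.arbitrary α := by
  have himg : (⋃ v : Set.Iio w, ({erSeq c y v.1} : Set α)) = erSeq c y '' Set.Iio w := by
    ext x
    constructor
    · intro hx
      obtain ⟨v, hv⟩ := Set.mem_iUnion.1 hx
      exact ⟨v.1, v.2, hv.symm⟩
    · rintro ⟨v, hv, rfl⟩
      exact Set.mem_iUnion.2 ⟨⟨v, hv⟩, rfl⟩
  conv_lhs => rw [erSeq, WellFounded.fix_eq]
  show (letI := Classical.propDecidable
    if h : ∃ x ∈ erA c, x ∉ (⋃ v : Set.Iio w, ({erSeq c y v.1} : Set α)) ∧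
        ∀ b ∈ (⋃ v : Set.Iio w, ({erSeq c y v.1} : Set α)), c x b = c y b then h.choose
    else Classical.arbitrary α) = _
  rw [himg]

theorem erSeq_spec {y : α} (hy : y ∉ erA c) (w : W.{u}) :
    erSeq c y w ∈ erA c ∧ erSeq c y w ∉ (erSeq c y '' Set.Iio w) ∧
      ∀ v < w, c (erSeq c y w) (erSeq c y v) = c y (erSeq c y v) := by
  refine (wellFounded_lt (α := W.{u})).induction
    (C := fun w => erSeq c y w ∈ erA c ∧ erSeq c y w ∉ (erSeq c y '' Set.Iio w) ∧
      ∀ v < w, c (erSeq c y w) (erSeq c y v) = c y (erSeq c y v)) w ?_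
  intro w ih
  have hBA : erSeq c y '' Set.Iio w ⊆ erA c := by
    rintro _ ⟨v, hv, rfl⟩
    exact (ih v hv).1
  have hB : (erSeq c y '' Set.Iio w).Countable := (countable_Iio w).image _
  have hyB : y ∉ erSeq c y '' Set.Iio w := fun h => hy (hBA h)
  obtain ⟨x, hx1, hx2, hx3⟩ := erA_sat c hBA hB hyB
  have hex : ∃ x ∈ erA c, x ∉ (erSeq c y '' Set.Iio w) ∧
      ∀ b ∈ (erSeq c y '' Set.Iio w), c x b = c y b := ⟨x, hx1, hx2, hx3⟩
  classical
  have heq : erSeq c y w = hex.choose := by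
    rw [erSeq_eq]
    simp only [dif_pos hex]
  obtain ⟨h1, h2, h3⟩ := hex.choose_spec
  rw [← heq] at h1 h2 h3
  exact ⟨h1, h2, fun v hv => h3 _ ⟨v, hv, rfl⟩⟩

theorem erSeq_injective {y : α} (hy : y ∉ erA c) : Function.Injective (erSeq c y) := by
  intro v w hvw
  by_contra hne
  rcases lt_or_gt_of_ne hne with h | h
  · exact (erSeq_spec c hy w).2.1 ⟨v, h, hvw⟩
  · exact (erSeq_spec c hy v).2.1 ⟨w, h, hvw.symm⟩

/-- The countable Erdős–Rado theorem, in the form needed here: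
a symmetric `ℕ`-colouring of the pairs of a set of size greater than the continuum
has an uncountable homogeneous set. -/
theorem erdos_rado_aux (hsym : ∀ x y : α, c x y = c y x) (hX : 2 ^ ℵ₀ < #α) :
    ∃ (n : ℕ) (A : Set α), ¬ A.Countable ∧ ∀ x ∈ A, ∀ y ∈ A, x ≠ y → c x y = n := by
  have hy : ∃ y, y ∉ erA c := by
    by_contra h
    push_neg at h
    have : (Set.univ : Set α) ⊆ erA c := fun x _ => h x
    have := (Cardinal.mk_le_mk_of_subset this).trans (mk_erA_le c)
    rw [Cardinal.mk_univ] at this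
    exact absurd this (not_le.2 hX)
  obtain ⟨y, hy⟩ := hy
  set F : ℕ → Set W.{u} := fun n => {w | c y (erSeq c y w) = n} with hF
  have hcov : (Set.univ : Set W.{u}) = ⋃ n, F n := by
    ext w; simp [hF]
  have hn : ∃ n, ¬ (F n).Countable := by
    by_contra h
    push_neg at h
    exact uncountable_W.{u} (hcov ▸ Set.countable_iUnion h)
  obtain ⟨n, hn⟩ := hn
  refine ⟨n, erSeq c y '' F n, ?_, ?_⟩
  · intro hcnt
    exact hn ((hcnt.preimage (erSeq_injective c hy)).mono
      (Set.subset_preimage_image _ _))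
  · rintro _ ⟨v, hv, rfl⟩ _ ⟨w, hw, rfl⟩ hne
    have hvw : v ≠ w := fun h => hne (by rw [h])
    rcases lt_or_gt_of_ne hvw with h | h
    · rw [hsym]
      rw [(erSeq_spec c hy w).2.2 v h]
      exact hv
    · rw [(erSeq_spec c hy v).2.2 w h]
      exact hw

end ER

end Stmt8Aux


theorem stmt8 (X : Type u) [TopologicalSpace X] [T2Space X]
    (hs : StarCDC X) (hd : HasRank3Diagonal X) :
    #X ≤ 2 ^ ℵ₀ := by
  by_contra hle
  push_neg at hle
  obtain ⟨𝒰, h𝒰, hsep⟩ := hd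
  -- the "3-chain" predicate
  set P : ℕ → X → X → Prop := fun n x y => ∃ U ∈ 𝒰 n, ∃ V ∈ 𝒰 n, ∃ Wt ∈ 𝒰 n,
      x ∈ U ∧ (U ∩ V).Nonempty ∧ (V ∩ Wt).Nonempty ∧ y ∈ Wt with hP
  have mem_st_iff : ∀ (A : Set X) (𝒱 : Set (Set X)) (y : X),
      y ∈ st X A 𝒱 ↔ ∃ U ∈ 𝒱, (A ∩ U).Nonempty ∧ y ∈ U := by
    intro A 𝒱 y
    constructor
    · rintro ⟨U, ⟨hU, hne⟩, hyU⟩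
      exact ⟨U, hU, hne, hyU⟩
    · rintro ⟨U, hU, hne, hyU⟩
      exact ⟨U, ⟨hU, hne⟩, hyU⟩
  have mem_st3_iff : ∀ (n : ℕ) (x y : X),
      y ∈ st X (st X (st X {x} (𝒰 n)) (𝒰 n)) (𝒰 n) ↔ P n x y := by
    intro n x y
    constructor
    · intro hy
      obtain ⟨Wt, hWt, ⟨z2, hz2st, hz2W⟩, hyW⟩ := (mem_st_iff _ _ _).1 hy
      obtain ⟨V, hV, ⟨z1, hz1st, hz1V⟩, hz2V⟩ := (mem_st_iff _ _ _).1 hz2st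
      obtain ⟨U, hU, hxU, hz1U⟩ := (mem_st_iff _ _ _).1 hz1st
      rw [Set.singleton_inter_nonempty] at hxU
      exact ⟨U, hU, V, hV, Wt, hWt, hxU, ⟨z1, hz1U, hz1V⟩, ⟨z2, hz2V, hz2W⟩, hyW⟩
    · rintro ⟨U, hU, V, hV, Wt, hWt, hxU, ⟨z1, hz1U, hz1V⟩, ⟨z2, hz2V, hz2W⟩, hyW⟩
      have h1 : z1 ∈ st X {x} (𝒰 n) :=
        (mem_st_iff _ _ _).2 ⟨U, hU, Set.singleton_inter_nonempty.2 hxU, hz1U⟩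
      have h2 : z2 ∈ st X (st X {x} (𝒰 n)) (𝒰 n) :=
        (mem_st_iff _ _ _).2 ⟨V, hV, ⟨z1, h1, hz1V⟩, hz2V⟩
      exact (mem_st_iff _ _ _).2 ⟨Wt, hWt, ⟨z2, h2, hz2W⟩, hyW⟩
  have hPsymm : ∀ n x y, P n x y → P n y x := by
    rintro n x y ⟨U, hU, V, hV, Wt, hWt, hxU, h1, h2, hyW⟩
    exact ⟨Wt, hWt, V, hV, U, hU, hyW, h2.imp (fun z hz => ⟨hz.2, hz.1⟩),
      h1.imp (fun z hz => ⟨hz.2, hz.1⟩), hxU⟩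
  -- the colouring
  set Q : ℕ → X → X → Prop := fun n x y => ¬ P n x y ∧ ¬ P n y x with hQ
  have hQex : ∀ x y : X, x ≠ y → ∃ n, Q n x y := by
    intro x y hxy
    have hy : y ∉ ({x} : Set X) := hxy.symm
    rw [← hsep x] at hy
    simp only [Set.mem_iInter, not_forall] at hy
    obtain ⟨n, hn⟩ := hy
    rw [mem_st3_iff] at hn
    exact ⟨n, hn, fun h => hn (hPsymm n y x h)⟩
  classical
  set c : X → X → ℕ := fun x y => if h : ∃ n, Q n x y then Nat.find h else 0 with hc
  have hcsym : ∀ x y : X, c x y = c y x := by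
    intro x y
    rw [hc]
    simp only []
    by_cases h1 : ∃ n, Q n x y
    · have h2 : ∃ n, Q n y x := h1.imp fun n hn => ⟨hn.2, hn.1⟩
      rw [dif_pos h1, dif_pos h2]
      apply le_antisymm
      · exact Nat.find_le ⟨(Nat.find_spec h2).2, (Nat.find_spec h2).1⟩
      · exact Nat.find_le ⟨(Nat.find_spec h1).2, (Nat.find_spec h1).1⟩
    · have h2 : ¬ ∃ n, Q n y x := fun h => h1 (h.imp fun n hn => ⟨hn.2, hn.1⟩)
      rw [dif_neg h1, dif_neg h2]
  haveI : Nonempty X := Cardinal.mk_ne_zero_iff.1 ((zero_le : (0 : Cardinal.{u}) ≤ 2 ^ ℵ₀).trans_lt hle).ne'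
  obtain ⟨n, A, hAunc, hAhom⟩ := Stmt8Aux.erdos_rado_aux c hcsym hle
  have hAnotP : ∀ x ∈ A, ∀ y ∈ A, x ≠ y → ¬ P n x y := by
    intro x hx y hy hxy
    have := hAhom x hx y hy hxy
    rw [hc] at this
    simp only [] at this
    rw [dif_pos (hQex x y hxy)] at this
    have hspec := Nat.find_spec (hQex x y hxy)
    rw [this] at hspec
    exact hspec.1
  -- apply star-cdc to the cover 𝒰 n
  obtain ⟨Y, hYcdc, hYst⟩ := hs (𝒰 n) (h𝒰 n)
  have hU : ∀ a : X, ∃ U, (U ∈ 𝒰 n ∧ (Y ∩ U).Nonempty) ∧ a ∈ U := by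
    intro a
    have : a ∈ st X Y (𝒰 n) := by rw [hYst]; trivial
    exact this
  choose U hUmem using hU
  set G : X → Set ↥Y := fun a => (Subtype.val : ↥Y → X) ⁻¹' (U a) with hG
  have hGopen : ∀ a : X, IsOpen (G a) :=
    fun a => ((h𝒰 n).1 (U a) (hUmem a).1.1).preimage continuous_subtype_val
  have hGne : ∀ a : X, (G a).Nonempty := by
    intro a
    obtain ⟨p, hpY, hpU⟩ := (hUmem a).1.2
    exact ⟨⟨p, hpY⟩, hpU⟩
  have hchain : ∀ a ∈ A, ∀ b ∈ A, a ≠ b → ∀ V : Set X,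
      V ∈ 𝒰 n → (V ∩ U a).Nonempty → (V ∩ U b).Nonempty → False := by
    intro a ha b hb hab V hV ⟨p, hpV, hpa⟩ ⟨q, hqV, hqb⟩
    exact hAnotP a ha b hb hab ⟨U a, (hUmem a).1.1, V, hV, U b, (hUmem b).1.1,
      (hUmem a).2, ⟨p, hpa, hpV⟩, ⟨q, hqV, hqb⟩, (hUmem b).2⟩
  have hdisc : IsDiscreteFamily ↥Y (G '' A) := by
    intro z
    have hz : (z : X) ∈ ⋃₀ 𝒰 n := by rw [(h𝒰 n).2]; trivial
    obtain ⟨V, hV, hzV⟩ := hz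
    refine ⟨(Subtype.val : ↥Y → X) ⁻¹' V,
      ((h𝒰 n).1 V hV).preimage continuous_subtype_val, hzV, ?_⟩
    rintro S1 ⟨⟨a, ha, rfl⟩, ⟨p, hpV, hpa⟩⟩ S2 ⟨⟨b, hb, rfl⟩, ⟨q, hqV, hqb⟩⟩
    by_cases hab : a = b
    · rw [hab]
    · exact absurd (hchain a ha b hb hab V hV ⟨p.1, hpV, hpa⟩ ⟨q.1, hqV, hqb⟩) not_false
  have hopens : ∀ S ∈ G '' A, IsOpen S ∧ S.Nonempty := by
    rintro S ⟨a, _, rfl⟩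
    exact ⟨hGopen a, hGne a⟩
  have hcnt : (G '' A).Countable := hYcdc (G '' A) hopens hdisc
  have hinj : Set.InjOn G A := by
    intro a ha b hb hGab
    by_contra hab
    obtain ⟨p, hpa⟩ := hGne a
    have hpb : (p : X) ∈ U b := by
      have : p ∈ G b := hGab ▸ hpa
      exact this
    exact hchain a ha b hb hab (U a) (hUmem a).1.1 ⟨a, (hUmem a).2, (hUmem a).2⟩
      ⟨p.1, hpa, hpb⟩
  exact hAunc (Set.countable_of_injective_of_countable_image hinj hcnt)
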